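/- Upper bound on the regularity radius: for a nonsingular n×n real matrix A and Δ ≥ 0, d(A, Δ) ≤ 1 / max_i (|A⁻¹|Δ)_{ii}, provided the maximal diagonal entry of |A⁻¹|Δ is positive. -/

import Mathlib

open Matrix
open scoped ENNReal NNReal

noncomputable def regRad {n : ℕ} (A Δ : Matrix (Fin n) (Fin n) ℝ) : ℝ≥0∞ :=
  ⨅ δ ∈ {δ : ℝ≥0 | ∃ M : Matrix (Fin n) (Fin n) ℝ,
      (∀ i j, |M i j - A i j| ≤ (δ : ℝ) * Δ i j) ∧ M.det = 0},
    (δ : ℝ≥0∞)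

theorem regRad_upper_bound {n : ℕ} (A Δ : Matrix (Fin (n + 1)) (Fin (n + 1)) ℝ)
    (hA : A.det ≠ 0) (hΔ : ∀ i j, 0 ≤ Δ i j)
    (hpos : 0 < Finset.univ.sup' Finset.univ_nonempty
      (fun i => ((A⁻¹).map (fun x => |x|) * Δ) i i)) :
    regRad A Δ ≤ ENNReal.ofReal
      (1 / Finset.univ.sup' Finset.univ_nonempty
        (fun i => ((A⁻¹).map (fun x => |x|) * Δ) i i)) := by
  set s := Finset.univ.sup' Finset.univ_nonempty
      (fun i => ((A⁻¹).map (fun x => |x|) * Δ) i i) with hs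
  have hs0 : s ≠ 0 := ne_of_gt hpos
  obtain ⟨k, -, hk⟩ := Finset.exists_mem_eq_sup' (Finset.univ_nonempty)
      (fun i => ((A⁻¹).map (fun x => |x|) * Δ) i i)
  set B := A⁻¹ with hB
  -- choice of sign vector
  set c : Fin (n + 1) → ℝ := fun i => if B k i < 0 then -Δ i k else Δ i k with hc
  have hBc : ∀ j, B k j * c j = |B k j| * Δ j k := by
    intro j
    simp only [hc]
    by_cases h : B k j < 0
    · rw [if_pos h, abs_of_neg h]; ring
    · rw [if_neg h, abs_of_nonneg (not_lt.1 h)]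
  have habs_c : ∀ i, |c i| = Δ i k := by
    intro i
    simp only [hc]
    by_cases h : B k i < 0
    · rw [if_pos h, abs_neg, abs_of_nonneg (hΔ i k)]
    · rw [if_neg h, abs_of_nonneg (hΔ i k)]
  have hsum : ∑ j, B k j * c j = s := by
    rw [hs, hk, Matrix.mul_apply]
    exact Finset.sum_congr rfl fun j _ => by
      rw [hBc j, Matrix.map_apply]
  -- the singular matrix
  set M := A.updateCol k (fun i => A i k + (-s⁻¹) • c i) with hM
  have hdet : M.det = 0 := by
    have h1 : M.det = A.det + (-s⁻¹) * (A.updateCol k c).det := by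
      rw [hM]
      have : (fun i => A i k + (-s⁻¹) • c i) = (fun i => A i k) + (-s⁻¹) • c := rfl
      rw [this, Matrix.det_updateCol_add, Matrix.det_updateCol_smul,
        Matrix.updateCol_eq_self]
    have h2 : (A.updateCol k c).det = A.det * s := by
      have hcr : A.cramer c k = (A.updateCol k c).det := Matrix.cramer_apply A c k
      have := Matrix.det_smul_inv_mulVec_eq_cramer A c (isUnit_iff_ne_zero.2 hA)
      have h3 : (A.det • A⁻¹ *ᵥ c) k = A.det * s := by
        simp only [Matrix.smul_mulVec, Pi.smul_apply, smul_eq_mul,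
          Matrix.mulVec, dotProduct]
        rw [← hB, hsum]
      rw [← hcr, ← this, h3]
    rw [h1, h2]
    field_simp
    ring
  -- membership
  set δ₀ : ℝ≥0 := (1 / s).toNNReal with hδ₀
  have hδ₀coe : (δ₀ : ℝ) = 1 / s := Real.coe_toNNReal _ (by positivity)
  have hmem : δ₀ ∈ {δ : ℝ≥0 | ∃ M : Matrix (Fin (n + 1)) (Fin (n + 1)) ℝ,
      (∀ i j, |M i j - A i j| ≤ (δ : ℝ) * Δ i j) ∧ M.det = 0} := by
    refine ⟨M, fun i j => ?_, hdet⟩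
    rw [hM, Matrix.updateCol_apply]
    by_cases h : j = k
    · subst h
      rw [if_pos rfl]
      have : A i j + (-s⁻¹) • c i - A i j = -s⁻¹ * c i := by simp only [smul_eq_mul]; ring
      rw [this, abs_mul, abs_neg, abs_inv, abs_of_pos hpos, habs_c i, hδ₀coe]
      rw [one_div]
    · rw [if_neg h]
      simp only [sub_self, abs_zero]
      exact mul_nonneg δ₀.2 (hΔ i j)
  have hle : regRad A Δ ≤ (δ₀ : ℝ≥0∞) := by
    rw [regRad]
    exact iInf₂_le δ₀ hmem
  calc regRad A Δ ≤ (δ₀ : ℝ≥0∞) := hle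
    _ = ENNReal.ofReal (1 / s) := by rw [hδ₀, ENNReal.ofReal]
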